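/- For any matrix Y ∈ ℝ^{m×n}, any rank r, and any μ > 0, the soft shrinkage operator and the hard thresholding operator commute: S_μ(R_r(Y)) = R_r(S_μ(Y)). -/

import Mathlib

open scoped BigOperators
open Matrix

noncomputable section

/-- Frobenius (trace) inner product of real matrices. -/
def frobInner {m n : ℕ} (X Y : Matrix (Fin m) (Fin n) ℝ) : ℝ :=
  ∑ i, ∑ j, X i j * Y i j

/-- Frobenius norm of a real matrix. -/
def frobNorm {m n : ℕ} (X : Matrix (Fin m) (Fin n) ℝ) : ℝ :=
  Real.sqrt (frobInner X X)

/-- Euclidean norm of a vector in ℝ^p. -/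
def vecNorm {p : ℕ} (b : Fin p → ℝ) : ℝ :=
  Real.sqrt (∑ i, b i ^ 2)

/-- Rectangular diagonal matrix with diagonal entries σ. -/
def rectDiag {m n : ℕ} (σ : Fin m → ℝ) : Matrix (Fin m) (Fin n) ℝ :=
  Matrix.of fun i j => if (j : ℕ) = (i : ℕ) then σ i else 0

/-- `(U, σ, V)` is a (full) singular value decomposition of `Y`, with the
singular values σ nonnegative and nonincreasing. -/
def IsSVD {m n : ℕ} (Y : Matrix (Fin m) (Fin n) ℝ) (U : Matrix (Fin m) (Fin m) ℝ)
    (σ : Fin m → ℝ) (V : Matrix (Fin n) (Fin n) ℝ) : Prop :=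
  Uᵀ * U = 1 ∧ Vᵀ * V = 1 ∧ (∀ i, 0 ≤ σ i) ∧ (∀ i j : Fin m, i ≤ j → σ j ≤ σ i) ∧
    Y = U * rectDiag σ * Vᵀ

/-- `Z = S_μ(Y)`: soft shrinkage of the singular values of `Y` by `μ`. -/
def IsSoftShrink {m n : ℕ} (μ : ℝ) (Y Z : Matrix (Fin m) (Fin n) ℝ) : Prop :=
  ∃ U σ V, IsSVD Y U σ V ∧ Z = U * rectDiag (fun i => max (σ i - μ) 0) * Vᵀ

/-- `Z = R_r(Y)`: hard thresholding keeping the `r` largest singular values of `Y`. -/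
def IsHardThresh {m n : ℕ} (r : ℕ) (Y Z : Matrix (Fin m) (Fin n) ℝ) : Prop :=
  ∃ U σ V, IsSVD Y U σ V ∧ Z = U * rectDiag (fun i => if (i : ℕ) < r then σ i else 0) * Vᵀ

namespace SVDAux
open Polynomial

variable {m n : ℕ}

lemma rectDiag_apply (σ : Fin m → ℝ) (i : Fin m) (j : Fin n) :
    (rectDiag σ : Matrix (Fin m) (Fin n) ℝ) i j = if (j : ℕ) = (i : ℕ) then σ i else 0 := rfl

lemma rectDiag_congr {σ τ : Fin m → ℝ} (h : ∀ i, σ i = τ i) :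
    (rectDiag σ : Matrix (Fin m) (Fin n) ℝ) = rectDiag τ := by
  ext i j; simp [rectDiag_apply, h]

lemma rectDiag_add (σ τ : Fin m → ℝ) :
    (rectDiag (fun i => σ i + τ i) : Matrix (Fin m) (Fin n) ℝ) = rectDiag σ + rectDiag τ := by
  ext i j; simp [rectDiag_apply, Matrix.add_apply]; split <;> simp

lemma cstar_mul (U : Matrix (Fin m) (Fin m) ℝ) (σ : Fin m → ℝ) (V : Matrix (Fin n) (Fin n) ℝ) :
    U * rectDiag σ * Vᵀ = U * (rectDiag σ : Matrix (Fin m) (Fin n) ℝ) * Vᵀ := rfl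

lemma rectDiag_zero : (rectDiag (fun _ => (0:ℝ)) : Matrix (Fin m) (Fin n) ℝ) = 0 := by
  ext i j; simp [rectDiag_apply]

/-- entry of X * rectDiag ρ (X square m×m). -/
lemma mul_rectDiag_apply (X : Matrix (Fin m) (Fin m) ℝ) (ρ : Fin m → ℝ) (a : Fin m) (j : Fin n) :
    (X * rectDiag ρ) a j = if h : (j : ℕ) < m then ρ ⟨j, h⟩ * X a ⟨j, h⟩ else 0 := by
  rw [Matrix.mul_apply]
  by_cases h : (j : ℕ) < m
  · rw [dif_pos h, Finset.sum_eq_single (⟨(j:ℕ), h⟩ : Fin m)]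
    · simp [rectDiag_apply, mul_comm]
    · intro k _ hk
      simp only [rectDiag_apply, of_apply]
      rw [if_neg, mul_zero]
      intro hjk; exact hk (Fin.ext hjk.symm)
    · simp
  · rw [dif_neg h]
    apply Finset.sum_eq_zero
    intro k _
    simp only [rectDiag_apply, of_apply]
    rw [if_neg, mul_zero]
    intro hjk; exact h (hjk ▸ k.isLt)

lemma mul_rectDiagT_apply (hmn : m ≤ n) (Wm : Matrix (Fin n) (Fin n) ℝ) (ρ : Fin m → ℝ)
    (b : Fin n) (i : Fin m) :
    (Wm * ((rectDiag ρ : Matrix (Fin m) (Fin n) ℝ))ᵀ) b i = ρ i * Wm b (Fin.castLE hmn i) := by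
  rw [Matrix.mul_apply]
  rw [Finset.sum_eq_single (Fin.castLE hmn i)]
  · simp [rectDiag_apply, Matrix.transpose_apply, mul_comm]
  · intro j _ hj
    simp only [Matrix.transpose_apply, rectDiag_apply, of_apply]
    rw [if_neg, mul_zero]
    intro hji; exact hj (Fin.ext hji)
  · simp

lemma trip_entry (hmn : m ≤ n) (X : Matrix (Fin m) (Fin m) ℝ) (ρ : Fin m → ℝ)
    (Wm : Matrix (Fin n) (Fin n) ℝ) (a : Fin m) (b : Fin n) :
    (X * (rectDiag ρ : Matrix (Fin m) (Fin n) ℝ) * Wmᵀ) a b = ∑ i, ρ i * X a i * Wm b (Fin.castLE hmn i) := by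
  rw [Matrix.mul_apply]
  have step : ∀ j : Fin n, (X * rectDiag ρ) a j * Wmᵀ j b
      = if h : (j : ℕ) < m then ρ ⟨j, h⟩ * X a ⟨j, h⟩ * Wm b j else 0 := by
    intro j
    rw [mul_rectDiag_apply, Matrix.transpose_apply]
    by_cases h : (j : ℕ) < m
    · rw [dif_pos h, dif_pos h]
    · rw [dif_neg h, dif_neg h, zero_mul]
  simp only [step]
  rw [← Finset.sum_subset (Finset.subset_univ
      (Finset.image (Fin.castLE hmn) Finset.univ))]
  · rw [Finset.sum_image (fun x _ y _ h => Fin.castLE_injective hmn h)]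
    apply Finset.sum_congr rfl
    intro i _
    rw [dif_pos (by simpa using i.isLt)]
    congr 1
  · intro j _ hj
    rw [dif_neg]
    intro h
    exact hj (Finset.mem_image.mpr ⟨⟨(j:ℕ), h⟩, Finset.mem_univ _, Fin.ext rfl⟩)


lemma rectDiagT_mul_rectDiag (σ : Fin m → ℝ) :
    ((rectDiag σ : Matrix (Fin m) (Fin n) ℝ))ᵀ * rectDiag σ
      = Matrix.diagonal (fun j : Fin n => if h : (j : ℕ) < m then σ ⟨j, h⟩ ^ 2 else 0) := by
  ext j j'
  rw [Matrix.mul_apply]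
  by_cases h : j = j'
  · subst h
    rw [Matrix.diagonal_apply_eq]
    by_cases h2 : (j : ℕ) < m
    · rw [dif_pos h2, Finset.sum_eq_single (⟨(j:ℕ), h2⟩ : Fin m)]
      · simp [rectDiag_apply, sq]
      · intro k _ hk
        simp only [Matrix.transpose_apply, rectDiag_apply, of_apply]
        rw [if_neg, zero_mul]
        intro hjk; exact hk (Fin.ext hjk.symm)
      · simp
    · rw [dif_neg h2]
      apply Finset.sum_eq_zero
      intro k _
      simp only [Matrix.transpose_apply, rectDiag_apply, of_apply]
      rw [if_neg, zero_mul]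
      intro hjk; exact h2 (hjk ▸ k.isLt)
  · rw [Matrix.diagonal_apply_ne _ h]
    apply Finset.sum_eq_zero
    intro k _
    simp only [Matrix.transpose_apply, rectDiag_apply, of_apply]
    split_ifs with ha hb
    · exact absurd (Fin.ext (ha.trans hb.symm)) h
    · rw [mul_zero]
    · rw [zero_mul]
    · rw [zero_mul]

lemma rectDiag_mul_diagonal (hmn : m ≤ n) (σ : Fin m → ℝ) (e : Fin n → ℝ) :
    (rectDiag σ : Matrix (Fin m) (Fin n) ℝ) * Matrix.diagonal e
      = rectDiag (fun i => σ i * e (Fin.castLE hmn i)) := by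
  ext i j
  rw [Matrix.mul_diagonal]
  simp only [rectDiag_apply, of_apply]
  by_cases h : (j : ℕ) = (i : ℕ)
  · rw [if_pos h, if_pos h]
    have hj : j = Fin.castLE hmn i := Fin.ext (by simpa using h)
    rw [hj]
  · rw [if_neg h, if_neg h, zero_mul]

lemma conj_pow {p : ℕ} (V M : Matrix (Fin p) (Fin p) ℝ) (h1 : V * Vᵀ = 1) (h2 : Vᵀ * V = 1)
    (k : ℕ) : (V * M * Vᵀ) ^ k = V * M ^ k * Vᵀ := by
  induction k with
  | zero => simp [h1]
  | succ k ih =>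
    rw [pow_succ, pow_succ, ih]
    calc V * M ^ k * Vᵀ * (V * M * Vᵀ) = V * M ^ k * (Vᵀ * V) * M * Vᵀ := by
          noncomm_ring
      _ = V * (M ^ k * M) * Vᵀ := by rw [h2]; noncomm_ring

lemma aeval_conj {p : ℕ} (V M : Matrix (Fin p) (Fin p) ℝ) (h1 : V * Vᵀ = 1) (h2 : Vᵀ * V = 1)
    (q : ℝ[X]) : Polynomial.aeval (V * M * Vᵀ) q = V * Polynomial.aeval M q * Vᵀ := by
  induction q using Polynomial.induction_on' with
  | add r s hr hs => rw [map_add, map_add, hr, hs, Matrix.mul_add, Matrix.add_mul]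
  | monomial k a =>
    rw [Polynomial.aeval_monomial, Polynomial.aeval_monomial, conj_pow V M h1 h2,
      Algebra.algebraMap_eq_smul_one]
    simp [Matrix.mul_smul, Matrix.smul_mul, mul_assoc]

lemma aeval_diagonal {p : ℕ} (d : Fin p → ℝ) (q : ℝ[X]) :
    Polynomial.aeval (Matrix.diagonal d) q = Matrix.diagonal (fun j => q.eval (d j)) := by
  induction q using Polynomial.induction_on' with
  | add r s hr hs =>
    rw [map_add, hr, hs]
    ext i j
    by_cases hij : i = j
    · subst hij; simp [Polynomial.eval_add]
    · simp [Matrix.diagonal_apply_ne _ hij]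
  | monomial k a =>
    rw [Polynomial.aeval_monomial, Matrix.diagonal_pow, Algebra.algebraMap_eq_smul_one,
      smul_mul_assoc, one_mul]
    ext i j
    by_cases hij : i = j
    · subst hij; simp [Polynomial.eval_monomial]
    · simp [Matrix.diagonal_apply_ne _ hij]


lemma triple_poly (hmn : m ≤ n) (U : Matrix (Fin m) (Fin m) ℝ) (V : Matrix (Fin n) (Fin n) ℝ)
    (τ : Fin m → ℝ) (hU : Uᵀ * U = 1) (hV : Vᵀ * V = 1) (q : ℝ[X]) :
    (U * (rectDiag τ : Matrix (Fin m) (Fin n) ℝ) * Vᵀ) * Polynomial.aeval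
        ((U * (rectDiag τ : Matrix (Fin m) (Fin n) ℝ) * Vᵀ)ᵀ
          * (U * (rectDiag τ : Matrix (Fin m) (Fin n) ℝ) * Vᵀ)) q
      = U * (rectDiag (fun i => τ i * q.eval (τ i ^ 2)) : Matrix (Fin m) (Fin n) ℝ) * Vᵀ := by
  have hVV : V * Vᵀ = 1 := mul_eq_one_comm.mp hV
  set d : Fin n → ℝ := fun j => if h : (j : ℕ) < m then τ ⟨j, h⟩ ^ 2 else 0 with hd
  have hZZ : (U * (rectDiag τ : Matrix (Fin m) (Fin n) ℝ) * Vᵀ)ᵀ * (U * (rectDiag τ : Matrix (Fin m) (Fin n) ℝ) * Vᵀ)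
      = V * Matrix.diagonal d * Vᵀ := by
    rw [Matrix.transpose_mul, Matrix.transpose_mul, Matrix.transpose_transpose]
    simp only [Matrix.mul_assoc]
    congr 1
    rw [← Matrix.mul_assoc Uᵀ U, hU, Matrix.one_mul, ← Matrix.mul_assoc,
      rectDiagT_mul_rectDiag, hd]
  rw [hZZ, aeval_conj V _ hVV hV, aeval_diagonal]
  simp only [Matrix.mul_assoc]
  rw [show Vᵀ * (V * ((Matrix.diagonal fun j => q.eval (d j)) * Vᵀ))
      = (Matrix.diagonal fun j => q.eval (d j)) * Vᵀ from by
    rw [← Matrix.mul_assoc, hV, Matrix.one_mul]]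
  congr 1
  rw [← Matrix.mul_assoc, rectDiag_mul_diagonal hmn]
  congr 1
  apply rectDiag_congr
  intro i
  congr 1
  rw [hd]
  simp only
  rw [dif_pos (by simpa using i.isLt)]
  congr 1

lemma spectral_welldef (hmn : m ≤ n) {U U' : Matrix (Fin m) (Fin m) ℝ}
    {V V' : Matrix (Fin n) (Fin n) ℝ} {τ : Fin m → ℝ}
    (hU : Uᵀ * U = 1) (hU' : U'ᵀ * U' = 1) (hV : Vᵀ * V = 1) (hV' : V'ᵀ * V' = 1)
    (hτ0 : ∀ i, 0 ≤ τ i)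
    (hZ : U * (rectDiag τ : Matrix (Fin m) (Fin n) ℝ) * Vᵀ = U' * (rectDiag τ : Matrix (Fin m) (Fin n) ℝ) * V'ᵀ)
    (f : ℝ → ℝ) (hf0 : f 0 = 0) :
    U * (rectDiag (fun i => f (τ i)) : Matrix (Fin m) (Fin n) ℝ) * Vᵀ = U' * (rectDiag (fun i => f (τ i)) : Matrix (Fin m) (Fin n) ℝ) * V'ᵀ := by
  classical
  set t : Finset ℝ := (Finset.univ.filter fun i => τ i ≠ 0).image (fun i => τ i ^ 2) with ht
  set q : ℝ[X] := Lagrange.interpolate t id (fun x => f (Real.sqrt x) / Real.sqrt x) with hq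
  have key : ∀ i, τ i * q.eval (τ i ^ 2) = f (τ i) := by
    intro i
    by_cases h : τ i = 0
    · rw [h, hf0]; ring
    · have hmem : τ i ^ 2 ∈ t := Finset.mem_image.mpr
        ⟨i, Finset.mem_filter.mpr ⟨Finset.mem_univ _, h⟩, rfl⟩
      have hev := Lagrange.eval_interpolate_at_node
        (fun x => f (Real.sqrt x) / Real.sqrt x) (Set.injOn_id _) hmem
      rw [← hq] at hev
      simp only [id_eq] at hev
      rw [hev, Real.sqrt_sq (hτ0 i)]
      field_simp
  have e1 := triple_poly hmn U V τ hU hV q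
  have e2 := triple_poly hmn U' V' τ hU' hV' q
  rw [hZ] at e1
  rw [rectDiag_congr (fun i => (key i).symm), ← e1, ← e2]


/-- Gram matrix of an SVD-form product. -/
lemma gram (U : Matrix (Fin m) (Fin m) ℝ) (V : Matrix (Fin n) (Fin n) ℝ)
    (σ : Fin m → ℝ) (hU : Uᵀ * U = 1) :
    (U * (rectDiag σ : Matrix (Fin m) (Fin n) ℝ) * Vᵀ)ᵀ
        * (U * (rectDiag σ : Matrix (Fin m) (Fin n) ℝ) * Vᵀ)
      = V * Matrix.diagonal (fun j : Fin n => if h : (j : ℕ) < m then σ ⟨j, h⟩ ^ 2 else 0)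
          * Vᵀ := by
  rw [Matrix.transpose_mul, Matrix.transpose_mul, Matrix.transpose_transpose]
  simp only [Matrix.mul_assoc]
  congr 1
  rw [← Matrix.mul_assoc Uᵀ U, hU, Matrix.one_mul, ← Matrix.mul_assoc,
    rectDiagT_mul_rectDiag]

lemma sv_unique (hmn : m ≤ n) {U1 U2 : Matrix (Fin m) (Fin m) ℝ}
    {V1 V2 : Matrix (Fin n) (Fin n) ℝ} {σ1 σ2 : Fin m → ℝ}
    (hU1 : U1ᵀ * U1 = 1) (hV1 : V1ᵀ * V1 = 1)
    (hσ1 : ∀ i, 0 ≤ σ1 i) (hm1 : ∀ i j : Fin m, i ≤ j → σ1 j ≤ σ1 i)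
    (hU2 : U2ᵀ * U2 = 1) (hV2 : V2ᵀ * V2 = 1)
    (hσ2 : ∀ i, 0 ≤ σ2 i) (hm2 : ∀ i j : Fin m, i ≤ j → σ2 j ≤ σ2 i)
    (hA : U1 * (rectDiag σ1 : Matrix (Fin m) (Fin n) ℝ) * V1ᵀ
        = U2 * (rectDiag σ2 : Matrix (Fin m) (Fin n) ℝ) * V2ᵀ) :
    σ1 = σ2 := by
  classical
  set d1 : Fin n → ℝ := fun j => if h : (j : ℕ) < m then σ1 ⟨j, h⟩ ^ 2 else 0 with hd1
  set d2 : Fin n → ℝ := fun j => if h : (j : ℕ) < m then σ2 ⟨j, h⟩ ^ 2 else 0 with hd2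
  have detconj : ∀ (V : Matrix (Fin n) (Fin n) ℝ) (M : Matrix (Fin n) (Fin n) ℝ),
      Vᵀ * V = 1 → (V * M * Vᵀ).det = M.det := by
    intro V M hV
    have hdv : V.det * V.det = 1 := by
      have := congrArg Matrix.det hV
      rwa [Matrix.det_mul, Matrix.det_transpose, Matrix.det_one] at this
    rw [Matrix.det_mul, Matrix.det_mul, Matrix.det_transpose]
    calc V.det * M.det * V.det = M.det * (V.det * V.det) := by ring
      _ = M.det := by rw [hdv, mul_one]
  have diagsub : ∀ (x : ℝ) (d : Fin n → ℝ),
      x • (1 : Matrix (Fin n) (Fin n) ℝ) - Matrix.diagonal d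
        = Matrix.diagonal (fun j => x - d j) := by
    intro x d
    ext i j
    by_cases hij : i = j
    · subst hij; simp
    · simp [Matrix.diagonal_apply_ne _ hij, Matrix.one_apply_ne hij]
  have sandwich : ∀ (V : Matrix (Fin n) (Fin n) ℝ) (d : Fin n → ℝ) (x : ℝ), Vᵀ * V = 1 →
      x • (1 : Matrix (Fin n) (Fin n) ℝ) - V * Matrix.diagonal d * Vᵀ
        = V * Matrix.diagonal (fun j => x - d j) * Vᵀ := by
    intro V d x hV
    have hVV : V * Vᵀ = 1 := mul_eq_one_comm.mp hV
    rw [← diagsub, Matrix.mul_sub, Matrix.sub_mul]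
    congr 1
    rw [Matrix.mul_smul, Matrix.mul_one, Matrix.smul_mul, hVV]
  have hdet : ∀ x : ℝ, ∏ j : Fin n, (x - d1 j) = ∏ j : Fin n, (x - d2 j) := by
    intro x
    have e1 := congrArg (fun M => (x • (1 : Matrix (Fin n) (Fin n) ℝ)
        - M).det) (gram U1 V1 σ1 hU1)
    have e2 := congrArg (fun M => (x • (1 : Matrix (Fin n) (Fin n) ℝ)
        - M).det) (gram U2 V2 σ2 hU2)
    rw [sandwich V1 _ x hV1, detconj V1 _ hV1, Matrix.det_diagonal] at e1
    rw [sandwich V2 _ x hV2, detconj V2 _ hV2, Matrix.det_diagonal] at e2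
    rw [← e1, ← e2, hA]
  have hP : (∏ j : Fin n, (X - Polynomial.C (d1 j)))
      = ∏ j : Fin n, (X - Polynomial.C (d2 j)) := by
    apply Polynomial.funext
    intro x
    simp only [Polynomial.eval_prod, Polynomial.eval_sub, Polynomial.eval_X, Polynomial.eval_C]
    exact hdet x
  have hroots : Multiset.map d1 Finset.univ.val = Multiset.map d2 Finset.univ.val := by
    have aux : ∀ d : Fin n → ℝ, (∏ j : Fin n, (X - Polynomial.C (d j))).roots
        = Multiset.map d Finset.univ.val := by
      intro d
      rw [Finset.prod_eq_multiset_prod]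
      have : Multiset.map (fun j => X - Polynomial.C (d j)) Finset.univ.val
          = Multiset.map (fun a => X - Polynomial.C a) (Multiset.map d Finset.univ.val) := by
        rw [Multiset.map_map]; rfl
      rw [this, Polynomial.roots_multiset_prod_X_sub_C]
    rw [← aux d1, ← aux d2, hP]
  have hanti : ∀ (σ : Fin m → ℝ), (∀ i, 0 ≤ σ i) → (∀ i j : Fin m, i ≤ j → σ j ≤ σ i) →
      ∀ j j' : Fin n, j ≤ j' →
        (if h : ((j' : ℕ)) < m then σ ⟨j', h⟩ ^ 2 else 0)
          ≤ (if h : ((j : ℕ)) < m then σ ⟨j, h⟩ ^ 2 else 0) := by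
    intro σ h0 hm j j' hjj
    by_cases h' : (j' : ℕ) < m
    · have h : (j : ℕ) < m := lt_of_le_of_lt hjj h'
      rw [dif_pos h, dif_pos h']
      exact pow_le_pow_left₀ (h0 _) (hm ⟨j, h⟩ ⟨j', h'⟩ hjj) 2
    · rw [dif_neg h']
      by_cases h : (j : ℕ) < m
      · rw [dif_pos h]; positivity
      · rw [dif_neg h]
  haveI : IsAntisymm ℝ (fun a b => b ≤ a) := ⟨fun a b h1 h2 => le_antisymm h2 h1⟩
  have hperm : (List.ofFn d1).Perm (List.ofFn d2) := by
    rw [← Multiset.coe_eq_coe, ← Fin.univ_val_map, ← Fin.univ_val_map]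
    exact hroots
  have hsorted : ∀ (σ : Fin m → ℝ) (h0 : ∀ i, 0 ≤ σ i)
      (hm' : ∀ i j : Fin m, i ≤ j → σ j ≤ σ i),
      List.Pairwise (fun a b => b ≤ a)
        (List.ofFn (fun j : Fin n => if h : ((j : ℕ)) < m then σ ⟨j, h⟩ ^ 2 else 0)) := by
    intro σ h0 hm'
    rw [List.pairwise_ofFn]
    intro i j hij
    exact hanti σ h0 hm' i j hij.le
  have hlist : List.ofFn d1 = List.ofFn d2 :=
    List.Perm.eq_of_pairwise' (hsorted σ1 hσ1 hm1) (hsorted σ2 hσ2 hm2) hperm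
  have hd12 : d1 = d2 := by
    funext j
    have hj : (j : ℕ) < (List.ofFn d1).length := by simp [j.isLt]
    have hget := congrArg (fun l : List ℝ => l.getD (j : ℕ) 0) hlist
    simpa [List.getD_eq_getElem?_getD, List.getElem?_ofFn, j.isLt] using hget
  funext i
  have := congrFun hd12 (Fin.castLE hmn i)
  rw [hd1, hd2] at this
  simp only at this
  rw [dif_pos (by simpa using i.isLt), dif_pos (by simpa using i.isLt)] at this
  have h2 : σ1 i ^ 2 = σ2 i ^ 2 := by
    convert this using 3 <;> exact (Fin.ext rfl)
  have := congrArg Real.sqrt h2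
  rwa [Real.sqrt_sq (hσ1 i), Real.sqrt_sq (hσ2 i)] at this


lemma mix (hmn : m ≤ n) (U U' : Matrix (Fin m) (Fin m) ℝ) (V V' : Matrix (Fin n) (Fin n) ℝ)
    (τ : Fin m → ℝ) (c : Fin m → Prop) [DecidablePred c]
    (hU : Uᵀ * U = 1) (hU' : U'ᵀ * U' = 1) (hV : Vᵀ * V = 1) (hV' : V'ᵀ * V' = 1)
    (hZ : U * (rectDiag τ : Matrix (Fin m) (Fin n) ℝ) * Vᵀ
        = U' * (rectDiag τ : Matrix (Fin m) (Fin n) ℝ) * V'ᵀ)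
    (hc1 : ∀ i, c i → τ i ≠ 0) (hc0 : ∀ i, ¬ c i → τ i = 0) :
    ∃ (Ut : Matrix (Fin m) (Fin m) ℝ) (Vt : Matrix (Fin n) (Fin n) ℝ),
      Utᵀ * Ut = 1 ∧ Vtᵀ * Vt = 1 ∧
      ∀ ρ : Fin m → ℝ, Ut * (rectDiag ρ : Matrix (Fin m) (Fin n) ℝ) * Vtᵀ =
        U' * (rectDiag (fun i => if c i then ρ i else 0) : Matrix (Fin m) (Fin n) ℝ) * V'ᵀ +
        U * (rectDiag (fun i => if c i then 0 else ρ i) : Matrix (Fin m) (Fin n) ℝ) * Vᵀ := by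
  classical
  set Z := U * (rectDiag τ : Matrix (Fin m) (Fin n) ℝ) * Vᵀ with hZdef
  -- column identities
  have ZV : ∀ (a : Fin m) (j : Fin n), (∑ b, Z a b * V b j)
      = if h : (j : ℕ) < m then τ ⟨j, h⟩ * U a ⟨j, h⟩ else 0 := by
    intro a j
    have h1 : (∑ b, Z a b * V b j) = (Z * V) a j := by rw [Matrix.mul_apply]
    have h2 : Z * V = U * rectDiag τ := by
      rw [hZdef, Matrix.mul_assoc, hV, Matrix.mul_one]
    rw [h1, h2, mul_rectDiag_apply]
  have ZV' : ∀ (a : Fin m) (j : Fin n), (∑ b, Z a b * V' b j)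
      = if h : (j : ℕ) < m then τ ⟨j, h⟩ * U' a ⟨j, h⟩ else 0 := by
    intro a j
    have h1 : (∑ b, Z a b * V' b j) = (Z * V') a j := by rw [Matrix.mul_apply]
    have h2 : Z * V' = U' * rectDiag τ := by
      rw [hZ, Matrix.mul_assoc, hV', Matrix.mul_one]
    rw [h1, h2, mul_rectDiag_apply]
  have ZU : ∀ (b : Fin n) (i : Fin m), (∑ a, Z a b * U a i)
      = τ i * V b (Fin.castLE hmn i) := by
    intro b i
    have h1 : (∑ a, Z a b * U a i) = (Zᵀ * U) b i := by
      rw [Matrix.mul_apply]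
      exact Finset.sum_congr rfl fun a _ => by rw [Matrix.transpose_apply]
    have h2 : Zᵀ * U = V * ((rectDiag τ : Matrix (Fin m) (Fin n) ℝ))ᵀ := by
      rw [hZdef, Matrix.transpose_mul, Matrix.transpose_mul, Matrix.transpose_transpose,
        Matrix.mul_assoc, Matrix.mul_assoc, hU, Matrix.mul_one]
    rw [h1, h2, mul_rectDiagT_apply hmn]
  have ZU' : ∀ (b : Fin n) (i : Fin m), (∑ a, Z a b * U' a i)
      = τ i * V' b (Fin.castLE hmn i) := by
    intro b i
    have h1 : (∑ a, Z a b * U' a i) = (Zᵀ * U') b i := by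
      rw [Matrix.mul_apply]
      exact Finset.sum_congr rfl fun a _ => by rw [Matrix.transpose_apply]
    have h2 : Zᵀ * U' = V' * ((rectDiag τ : Matrix (Fin m) (Fin n) ℝ))ᵀ := by
      rw [hZ, Matrix.transpose_mul, Matrix.transpose_mul, Matrix.transpose_transpose,
        Matrix.mul_assoc, Matrix.mul_assoc, hU', Matrix.mul_one]
    rw [h1, h2, mul_rectDiagT_apply hmn]
  -- the mixed matrices
  refine ⟨Matrix.of fun a i => if c i then U' a i else U a i,
    Matrix.of fun b j => if h : (j : ℕ) < m then
      (if c ⟨j, h⟩ then V' b j else V b j) else V b j, ?_, ?_, ?_⟩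
  · -- Ut orthogonal
    ext i j
    rw [Matrix.mul_apply]
    simp only [Matrix.transpose_apply, Matrix.of_apply]
    have entry : ∀ (Mx : Matrix (Fin m) (Fin m) ℝ), Mxᵀ * Mx = 1 →
        (∑ a, Mx a i * Mx a j) = (1 : Matrix (Fin m) (Fin m) ℝ) i j := by
      intro Mx h
      have h3 : (Mxᵀ * Mx) i j = (1 : Matrix (Fin m) (Fin m) ℝ) i j := by rw [h]
      rw [Matrix.mul_apply] at h3
      simpa [Matrix.transpose_apply] using h3
    have cross : ∀ i j : Fin m, c i → ¬ c j → (∑ a, U' a i * U a j) = 0 := by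
      intro i j ci cj
      have hτi := hc1 i ci
      have hτj := hc0 j cj
      have key : τ i * ∑ a, U' a i * U a j = 0 := by
        calc τ i * ∑ a, U' a i * U a j
            = ∑ a, (τ i * U' a i) * U a j := by
              rw [Finset.mul_sum]; exact Finset.sum_congr rfl fun a _ => by ring
          _ = ∑ a, (∑ b, Z a b * V' b (Fin.castLE hmn i)) * U a j := by
              refine Finset.sum_congr rfl fun a _ => ?_
              rw [ZV' a (Fin.castLE hmn i), dif_pos (by simpa using i.isLt)]
              congr 2 <;> exact congrArg _ (Fin.ext rfl)
          _ = ∑ a, ∑ b, (Z a b * V' b (Fin.castLE hmn i)) * U a j := by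
              simp [Finset.sum_mul]
          _ = ∑ b, ∑ a, (Z a b * V' b (Fin.castLE hmn i)) * U a j := Finset.sum_comm
          _ = ∑ b, V' b (Fin.castLE hmn i) * ∑ a, Z a b * U a j := by
              refine Finset.sum_congr rfl fun b _ => ?_
              rw [Finset.mul_sum]; exact Finset.sum_congr rfl fun a _ => by ring
          _ = ∑ b, V' b (Fin.castLE hmn i) * (τ j * V b (Fin.castLE hmn j)) := by
              exact Finset.sum_congr rfl fun b _ => by rw [ZU]
          _ = 0 := by simp [hτj]
      exact (mul_eq_zero.mp key).resolve_left hτi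
    have cross2 : ∀ i j : Fin m, ¬ c i → c j → (∑ a, U a i * U' a j) = 0 := by
      intro i j ci cj
      have := cross j i cj ci
      rw [← this]
      exact Finset.sum_congr rfl fun a _ => by ring
    by_cases ci : c i <;> by_cases cj : c j
    · simp only [if_pos ci, if_pos cj]; exact entry U' hU'
    · simp only [if_pos ci, if_neg cj]
      rw [cross i j ci cj, Matrix.one_apply_ne (by intro h; subst h; exact cj ci)]
    · simp only [if_neg ci, if_pos cj]
      rw [cross2 i j ci cj, Matrix.one_apply_ne (by intro h; subst h; exact ci cj)]
    · simp only [if_neg ci, if_neg cj]; exact entry U hU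
  · -- Vt orthogonal
    ext j j'
    rw [Matrix.mul_apply]
    simp only [Matrix.transpose_apply, Matrix.of_apply]
    have entry : ∀ (Mx : Matrix (Fin n) (Fin n) ℝ), Mxᵀ * Mx = 1 →
        (∑ b, Mx b j * Mx b j') = (1 : Matrix (Fin n) (Fin n) ℝ) j j' := by
      intro Mx h
      have h3 : (Mxᵀ * Mx) j j' = (1 : Matrix (Fin n) (Fin n) ℝ) j j' := by rw [h]
      rw [Matrix.mul_apply] at h3
      simpa [Matrix.transpose_apply] using h3
    have crossV : ∀ (j j' : Fin n) (h : (j : ℕ) < m), c ⟨j, h⟩ →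
        (∀ h' : (j' : ℕ) < m, ¬ c ⟨j', h'⟩) → (∑ b, V' b j * V b j') = 0 := by
      intro j j' h cj hj'
      set i : Fin m := ⟨(j : ℕ), h⟩ with hi
      have hτi := hc1 i cj
      have hjc : j = Fin.castLE hmn i := Fin.ext rfl
      have key : τ i * ∑ b, V' b j * V b j' = 0 := by
        calc τ i * ∑ b, V' b j * V b j'
            = ∑ b, (τ i * V' b (Fin.castLE hmn i)) * V b j' := by
              rw [Finset.mul_sum]; exact Finset.sum_congr rfl fun b _ => by rw [← hjc]; ring
          _ = ∑ b, (∑ a, Z a b * U' a i) * V b j' := by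
              refine Finset.sum_congr rfl fun b _ => ?_
              rw [ZU']
          _ = ∑ b, ∑ a, (Z a b * U' a i) * V b j' := by simp [Finset.sum_mul]
          _ = ∑ a, ∑ b, (Z a b * U' a i) * V b j' := Finset.sum_comm
          _ = ∑ a, U' a i * ∑ b, Z a b * V b j' := by
              refine Finset.sum_congr rfl fun a _ => ?_
              rw [Finset.mul_sum]; exact Finset.sum_congr rfl fun b _ => by ring
          _ = 0 := by
              refine Finset.sum_eq_zero fun a _ => ?_
              rw [ZV a j']
              by_cases h' : (j' : ℕ) < m
              · rw [dif_pos h', hc0 _ (hj' h'), zero_mul, mul_zero]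
              · rw [dif_neg h', mul_zero]
      exact (mul_eq_zero.mp key).resolve_left hτi
    have crossV2 : ∀ (j j' : Fin n) (h' : (j' : ℕ) < m), c ⟨j', h'⟩ →
        (∀ h : (j : ℕ) < m, ¬ c ⟨j, h⟩) → (∑ b, V b j * V' b j') = 0 := by
      intro j j' h' cj' hj
      have := crossV j' j h' cj' hj
      rw [← this]
      exact Finset.sum_congr rfl fun b _ => by ring
    by_cases h : (j : ℕ) < m <;> by_cases h' : (j' : ℕ) < m
    · simp only [dif_pos h, dif_pos h']
      by_cases cj : c ⟨j, h⟩ <;> by_cases cj' : c ⟨j', h'⟩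
      · simp only [if_pos cj, if_pos cj']; exact entry V' hV'
      · simp only [if_pos cj, if_neg cj']
        rw [crossV j j' h cj (fun h'' hcc => cj' hcc)]
        rw [Matrix.one_apply_ne]
        intro hjj'; subst hjj'; exact cj' cj
      · simp only [if_neg cj, if_pos cj']
        rw [crossV2 j j' h' cj' (fun h'' hcc => cj hcc)]
        rw [Matrix.one_apply_ne]
        intro hjj'; subst hjj'; exact cj cj'
      · simp only [if_neg cj, if_neg cj']; exact entry V hV
    · simp only [dif_pos h, dif_neg h']
      by_cases cj : c ⟨j, h⟩
      · simp only [if_pos cj]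
        rw [crossV j j' h cj (fun h'' _ => absurd h'' h')]
        rw [Matrix.one_apply_ne (by intro hjj'; subst hjj'; exact h' h)]
      · simp only [if_neg cj]; exact entry V hV
    · simp only [dif_neg h, dif_pos h']
      by_cases cj' : c ⟨j', h'⟩
      · simp only [if_pos cj']
        rw [crossV2 j j' h' cj' (fun h'' _ => absurd h'' h)]
        rw [Matrix.one_apply_ne (by intro hjj'; subst hjj'; exact h h')]
      · simp only [if_neg cj']; exact entry V hV
    · simp only [dif_neg h, dif_neg h']; exact entry V hV
  · -- product formula
    intro ρ
    ext a b
    rw [trip_entry hmn, Matrix.add_apply, trip_entry hmn, trip_entry hmn,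
      ← Finset.sum_add_distrib]
    refine Finset.sum_congr rfl fun i _ => ?_
    simp only [Matrix.of_apply, Fin.coe_castLE]
    rw [dif_pos i.isLt]
    by_cases ci : c i
    · rw [if_pos ci, if_pos (show c ⟨(i:ℕ), i.isLt⟩ from by convert ci),
        if_pos ci, if_pos ci]
      ring
    · rw [if_neg ci, if_neg (show ¬ c ⟨(i:ℕ), i.isLt⟩ from by convert ci),
        if_neg ci, if_neg ci]
      ring


lemma trip_add (U : Matrix (Fin m) (Fin m) ℝ) (V : Matrix (Fin n) (Fin n) ℝ)
    (a b : Fin m → ℝ) :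
    U * (rectDiag (fun i => a i + b i) : Matrix (Fin m) (Fin n) ℝ) * Vᵀ
      = U * (rectDiag a : Matrix (Fin m) (Fin n) ℝ) * Vᵀ + U * (rectDiag b : Matrix (Fin m) (Fin n) ℝ) * Vᵀ := by
  rw [rectDiag_add, Matrix.mul_add, Matrix.add_mul]

end SVDAux

section MainAux
open SVDAux

variable {m n : ℕ}

lemma trunc_nonneg {r : ℕ} {σ : Fin m → ℝ} (hσ0 : ∀ i, 0 ≤ σ i) :
    ∀ i : Fin m, 0 ≤ if (i : ℕ) < r then σ i else 0 := by
  intro i; split; exacts [hσ0 i, le_refl 0]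

lemma trunc_anti {r : ℕ} {σ : Fin m → ℝ} (hσ0 : ∀ i, 0 ≤ σ i)
    (hσm : ∀ i j : Fin m, i ≤ j → σ j ≤ σ i) :
    ∀ i j : Fin m, i ≤ j →
      (if (j : ℕ) < r then σ j else 0) ≤ (if (i : ℕ) < r then σ i else 0) := by
  intro i j hij
  by_cases hj : (j : ℕ) < r
  · rw [if_pos hj, if_pos (lt_of_le_of_lt (Fin.le_def.mp hij) hj)]
    exact hσm i j hij
  · rw [if_neg hj]; split; exacts [hσ0 i, le_refl 0]

lemma shr_nonneg {μ : ℝ} {σ : Fin m → ℝ} : ∀ i : Fin m, 0 ≤ max (σ i - μ) 0 :=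
  fun i => le_max_right _ _

lemma shr_anti {μ : ℝ} {σ : Fin m → ℝ} (hσm : ∀ i j : Fin m, i ≤ j → σ j ≤ σ i) :
    ∀ i j : Fin m, i ≤ j → max (σ j - μ) 0 ≤ max (σ i - μ) 0 := by
  intro i j hij
  exact max_le_max (by linarith [hσm i j hij]) (le_refl 0)

end MainAux

open SVDAux

/-- The soft shrinkage operator and the hard thresholding operator commute:
S_μ(R_r(Y)) = R_r(S_μ(Y)). -/
theorem softShrink_hardThresh_comm {m n : ℕ} (hmn : m ≤ n) (r : ℕ) (μ : ℝ) (hμ : 0 < μ)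
    (Y W : Matrix (Fin m) (Fin n) ℝ) :
    (∃ Z, IsHardThresh r Y Z ∧ IsSoftShrink μ Z W) ↔
      (∃ Z, IsSoftShrink μ Y Z ∧ IsHardThresh r Z W) := by
  classical
  constructor
  · rintro ⟨Z, ⟨U, σ, V, ⟨hU, hV, hσ0, hσm, hY⟩, hZdef⟩,
      U', τ, V', ⟨hU', hV', hτ0, hτm, hZ'⟩, hWdef⟩
    have hττ : τ = fun i : Fin m => if (i : ℕ) < r then σ i else 0 :=
      sv_unique hmn hU' hV' hτ0 hτm hU hV (trunc_nonneg hσ0) (trunc_anti hσ0 hσm)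
        (hZ'.symm.trans hZdef)
    subst hττ
    set c : Fin m → Prop := fun i => (i : ℕ) < r ∧ σ i ≠ 0 with hc
    have hc1 : ∀ i, c i → (if (i : ℕ) < r then σ i else 0) ≠ 0 := by
      intro i hi; rw [if_pos hi.1]; exact hi.2
    have hc0 : ∀ i, ¬ c i → (if (i : ℕ) < r then σ i else 0) = 0 := by
      intro i hi
      by_cases h : (i : ℕ) < r
      · rw [if_pos h]; by_contra hne; exact hi ⟨h, hne⟩
      · rw [if_neg h]
    have hZZ : U * (rectDiag (fun i => if (i : ℕ) < r then σ i else 0) : Matrix (Fin m) (Fin n) ℝ) * Vᵀ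
        = U' * (rectDiag (fun i => if (i : ℕ) < r then σ i else 0) : Matrix (Fin m) (Fin n) ℝ) * V'ᵀ :=
      hZdef.symm.trans hZ'
    obtain ⟨Ut, Vt, hUt, hVt, hprod⟩ := mix hmn U U' V V' _ c hU hU' hV hV' hZZ hc1 hc0
    have hYt : Y = Ut * (rectDiag σ : Matrix (Fin m) (Fin n) ℝ) * Vtᵀ := by
      rw [hprod σ]
      have e1 : (rectDiag (fun i => if c i then σ i else 0) : Matrix (Fin m) (Fin n) ℝ)
          = rectDiag (fun i => if (i : ℕ) < r then σ i else 0) := by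
        apply rectDiag_congr
        intro i
        by_cases h : c i
        · rw [if_pos h, if_pos h.1]
        · rw [if_neg h]
          by_cases h2 : (i : ℕ) < r
          · rw [if_pos h2]
            by_contra hne
            exact h ⟨h2, fun h3 => hne h3.symm⟩
          · rw [if_neg h2]
      rw [e1, ← hZZ, ← trip_add, hY, cstar_mul]
      congr 1
      congr 1
      apply rectDiag_congr
      intro i
      by_cases h : c i
      · rw [if_pos h, if_pos h.1, add_zero]
      · rw [if_neg h, hc0 i h, zero_add]
    refine ⟨Ut * rectDiag (fun i => max (σ i - μ) 0) * Vtᵀ,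
      ⟨Ut, σ, Vt, ⟨hUt, hVt, hσ0, hσm, hYt⟩, rfl⟩,
      Ut, (fun i => max (σ i - μ) 0), Vt,
      ⟨hUt, hVt, shr_nonneg, shr_anti hσm, rfl⟩, ?_⟩
    rw [hWdef, cstar_mul, cstar_mul, hprod]
    have ez : (rectDiag (fun i => if c i then 0 else
          (if (i : ℕ) < r then max (σ i - μ) 0 else 0)) : Matrix (Fin m) (Fin n) ℝ)
        = rectDiag (fun _ => 0) := by
      apply rectDiag_congr
      intro i
      by_cases h : c i
      · rw [if_pos h]
      · rw [if_neg h]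
        by_cases h2 : (i : ℕ) < r
        · rw [if_pos h2]
          have hσi : σ i = 0 := by
            by_contra hne; exact h ⟨h2, hne⟩
          rw [hσi]
          exact max_eq_right (by linarith)
        · rw [if_neg h2]
    rw [ez, rectDiag_zero, Matrix.mul_zero, Matrix.zero_mul, add_zero]
    congr 1
    congr 1
    apply rectDiag_congr
    intro i
    dsimp only
    by_cases h : c i
    · rw [if_pos h, if_pos h.1, if_pos h.1]
    · rw [if_neg h, hc0 i h]
      exact max_eq_right (by linarith)
  · rintro ⟨Z, ⟨U, σ, V, ⟨hU, hV, hσ0, hσm, hY⟩, hZdef⟩,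
      U', τ, V', ⟨hU', hV', hτ0, hτm, hZ'⟩, hWdef⟩
    have hττ : τ = fun i : Fin m => max (σ i - μ) 0 :=
      sv_unique hmn hU' hV' hτ0 hτm hU hV shr_nonneg (shr_anti hσm)
        (hZ'.symm.trans hZdef)
    subst hττ
    set c : Fin m → Prop := fun i => μ < σ i with hc
    have hc1 : ∀ i, c i → max (σ i - μ) 0 ≠ 0 := by
      intro i hi
      have : (0:ℝ) < max (σ i - μ) 0 := lt_max_iff.mpr (Or.inl (by simpa [hc] using by linarith [hi]))
      exact this.ne'
    have hc0 : ∀ i, ¬ c i → max (σ i - μ) 0 = 0 := by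
      intro i hi
      exact max_eq_right (by simp only [hc] at hi; linarith [not_lt.mp hi])
    have hZZ : U * (rectDiag (fun i => max (σ i - μ) 0) : Matrix (Fin m) (Fin n) ℝ) * Vᵀ
        = U' * (rectDiag (fun i => max (σ i - μ) 0) : Matrix (Fin m) (Fin n) ℝ) * V'ᵀ :=
      hZdef.symm.trans hZ'
    obtain ⟨Ut, Vt, hUt, hVt, hprod⟩ := mix hmn U U' V V' _ c hU hU' hV hV' hZZ hc1 hc0
    have hYt : Y = Ut * (rectDiag σ : Matrix (Fin m) (Fin n) ℝ) * Vtᵀ := by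
      rw [hprod σ]
      have e1 : (rectDiag (fun i => if c i then σ i else 0) : Matrix (Fin m) (Fin n) ℝ)
          = rectDiag (fun i => (fun x => if x = 0 then 0 else x + μ) (max (σ i - μ) 0)) := by
        apply rectDiag_congr
        intro i
        dsimp only
        by_cases h : c i
        · rw [if_pos h, if_neg (hc1 i h)]
          have hgt : μ < σ i := h
          rw [max_eq_left (by linarith)]
          ring
        · rw [if_neg h, hc0 i h, if_pos rfl]
      have hsw := spectral_welldef hmn hU' hU hV' hV shr_nonneg hZZ.symm
        (fun x => if x = 0 then 0 else x + μ) (by simp)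
      rw [e1, hsw]
      rw [← trip_add, hY, cstar_mul]
      congr 1
      congr 1
      apply rectDiag_congr
      intro i
      by_cases h : c i
      · rw [if_neg (hc1 i h), if_pos h]
        have hgt : μ < σ i := h
        rw [max_eq_left (by linarith)]
        ring
      · rw [hc0 i h, if_pos rfl, if_neg h, zero_add]
    refine ⟨Ut * rectDiag (fun i => if (i : ℕ) < r then σ i else 0) * Vtᵀ,
      ⟨Ut, σ, Vt, ⟨hUt, hVt, hσ0, hσm, hYt⟩, rfl⟩,
      Ut, (fun i => if (i : ℕ) < r then σ i else 0), Vt,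
      ⟨hUt, hVt, trunc_nonneg hσ0, trunc_anti hσ0 hσm, rfl⟩, ?_⟩
    rw [hWdef, cstar_mul, cstar_mul, hprod]
    have ez : (rectDiag (fun i => if c i then 0 else
          max ((if (i : ℕ) < r then σ i else 0) - μ) 0) : Matrix (Fin m) (Fin n) ℝ)
        = rectDiag (fun _ => 0) := by
      apply rectDiag_congr
      intro i
      by_cases h : c i
      · rw [if_pos h]
      · rw [if_neg h]
        have hle : σ i ≤ μ := by simp only [hc] at h; exact not_lt.mp h
        by_cases h2 : (i : ℕ) < r
        · rw [if_pos h2]; exact max_eq_right (by linarith)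
        · rw [if_neg h2]; exact max_eq_right (by linarith)
    rw [ez, rectDiag_zero, Matrix.mul_zero, Matrix.zero_mul, add_zero]
    congr 1
    congr 1
    apply rectDiag_congr
    intro i
    dsimp only
    by_cases h : c i
    · rw [if_pos h]
      by_cases h2 : (i : ℕ) < r
      · rw [if_pos h2, if_pos h2]
      · rw [if_neg h2, if_neg h2]
        exact (max_eq_right (by linarith)).symm
    · rw [if_neg h]
      have hle : σ i ≤ μ := by simp only [hc] at h; exact not_lt.mp h
      by_cases h2 : (i : ℕ) < r
      · rw [if_pos h2]
        exact max_eq_right (by linarith)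
      · rw [if_neg h2]
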